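/- There does not exist a (countably additive, nonnegative) measure μ on ℕ such that μ({n : x(n) ∈ S}) = w(x,S) for every properly distributed bounded real sequence x and every Borel subset S of [−‖x‖_∞, ‖x‖_∞]. -/

import Mathlib

open Filter

/-- A bounded real sequence. -/
def IsBddSeq (x : ℕ → ℝ) : Prop := ∃ C : ℝ, ∀ n, |x n| ≤ C

/-- The sup norm of a (bounded) real sequence. -/
noncomputable def supNorm (x : ℕ → ℝ) : ℝ := ⨆ n, |x n|

/-- A Banach limit: a linear functional on the space of bounded real sequences
(extended arbitrarily to all sequences) that is positive, shift-invariant,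
and sends the constant-one sequence to `1`. -/
def IsBanachLimit (L : (ℕ → ℝ) → ℝ) : Prop :=
  (∀ x y : ℕ → ℝ, IsBddSeq x → IsBddSeq y → L (x + y) = L x + L y) ∧
  (∀ (c : ℝ) (x : ℕ → ℝ), IsBddSeq x → L (c • x) = c * L x) ∧
  (∀ x : ℕ → ℝ, IsBddSeq x → (∀ n, 0 ≤ x n) → 0 ≤ L x) ∧
  (∀ x : ℕ → ℝ, IsBddSeq x → L (fun n => x (n + 1)) = L x) ∧
  L (fun _ => 1) = 1

/-- A bounded sequence is almost convergent if all Banach limits agree on it. -/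
def AlmostConvergent (x : ℕ → ℝ) : Prop :=
  ∃ c : ℝ, ∀ L : (ℕ → ℝ) → ℝ, IsBanachLimit L → L x = c

/-- `a` is a sub-limit of `x` if some subsequence of `x` converges to `a`. -/
def IsSubLimit (x : ℕ → ℝ) (a : ℝ) : Prop :=
  ∃ n : ℕ → ℕ, StrictMono n ∧ Tendsto (fun k => x (n k)) atTop (nhds a)

/-- The set of all sub-limits of `x`. -/
def subLimitSet (x : ℕ → ℝ) : Set ℝ := {a | IsSubLimit x a}

/-- `A({k : i ≤ n_k ≤ i + len - 1})`: the number of indices of the subsequence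
given by `n` falling in the window `[i, i + len - 1]`. -/
noncomputable def windowCount (n : ℕ → ℕ) (i len : ℕ) : ℕ :=
  {k : ℕ | i ≤ n k ∧ n k < i + len}.ncard

/-- Upper weight of a subsequence with index map `n`. -/
noncomputable def upperWeight (n : ℕ → ℕ) : ℝ :=
  limsup (fun len : ℕ => ⨆ i : ℕ, (windowCount n i len : ℝ) / len) atTop

/-- Lower weight of a subsequence with index map `n`. -/
noncomputable def lowerWeight (n : ℕ → ℕ) : ℝ :=
  liminf (fun len : ℕ => ⨅ i : ℕ, (windowCount n i len : ℝ) / len) atTop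

/-- `n` indexes an essential subsequence of `x` for the sub-limit `a`:
it converges to `a` and every subsequence of `x` converging to `a` has all
but finitely many of its indices among the `n k`. -/
def IsEssentialSubseq (x : ℕ → ℝ) (a : ℝ) (n : ℕ → ℕ) : Prop :=
  StrictMono n ∧ Tendsto (fun k => x (n k)) atTop (nhds a) ∧
  ∀ m : ℕ → ℕ, StrictMono m → Tendsto (fun t => x (m t)) atTop (nhds a) →
    {t : ℕ | ¬ ∃ k, n k = m t}.Finite

/-- The weight `w(a)` of a sub-limit `a` of `x` exists and equals `w`:
some essential subsequence of `a` has upper weight and lower weight both `w`. -/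
def HasSubLimitWeight (x : ℕ → ℝ) (a : ℝ) (w : ℝ) : Prop :=
  ∃ n : ℕ → ℕ, IsEssentialSubseq x a n ∧ upperWeight n = w ∧ lowerWeight n = w

/-- `A({k : x(k+i) ∈ S, k = 0, …, len-1})`. -/
noncomputable def seqCount (x : ℕ → ℝ) (S : Set ℝ) (i len : ℕ) : ℕ :=
  {k : ℕ | k < len ∧ x (k + i) ∈ S}.ncard

/-- The weight of `x` with respect to `S` exists and equals `w`:
`A({k : x(k+i) ∈ S, k = 0,…,n-1})/n → w` as `n → ∞`, uniformly in `i`. -/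
def HasSetWeight (x : ℕ → ℝ) (S : Set ℝ) (w : ℝ) : Prop :=
  ∀ ε : ℝ, 0 < ε → ∃ N : ℕ, ∀ n ≥ N, ∀ i : ℕ,
    |(seqCount x S i n : ℝ) / n - w| < ε

/-- `x` is properly distributed: every Borel subset of `[-‖x‖∞, ‖x‖∞]`
has a weight with respect to `x`. -/
def ProperlyDistributed (x : ℕ → ℝ) : Prop :=
  ∀ S : Set ℝ, MeasurableSet S → S ⊆ Set.Icc (-(supNorm x)) (supNorm x) →
    ∃ w : ℝ, HasSetWeight x S w

/-- `s` is simply distributed: it takes finitely many values, and each value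
has a weight with respect to `s`. -/
def SimplyDistributed (s : ℕ → ℝ) : Prop :=
  (Set.range s).Finite ∧ ∀ a ∈ Set.range s, ∃ w : ℝ, HasSetWeight s {a} w

/-- The sequence that is `1` at index `j` and `0` elsewhere. -/
noncomputable def xj (j : ℕ) : ℕ → ℝ := fun n => if n = j then 1 else 0

open Classical in
lemma seqCount_eq (x : ℕ → ℝ) (S : Set ℝ) (i len : ℕ) :
    seqCount x S i len = ((Finset.range len).filter (fun k => x (k + i) ∈ S)).card := by
  rw [seqCount, ← Set.ncard_coe_finset]
  congr 1
  ext k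
  simp [Finset.mem_filter, and_comm]

lemma one_div_eventually {ε : ℝ} (hε : 0 < ε) : ∃ N : ℕ, ∀ n ≥ N, (1 : ℝ) / n < ε := by
  obtain ⟨N, hN⟩ := exists_nat_one_div_lt hε
  refine ⟨N + 1, fun n hn => ?_⟩
  have hn' : (0 : ℝ) < N + 1 := by positivity
  have h1 : (1 : ℝ) / n ≤ 1 / (N + 1) := by
    apply one_div_le_one_div_of_le hn'
    exact_mod_cast hn
  exact lt_of_le_of_lt h1 hN

lemma hasSetWeight_of_close (x : ℕ → ℝ) (S : Set ℝ) (w : ℝ)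
    (h : ∀ i n : ℕ, 1 ≤ n → |(seqCount x S i n : ℝ) / n - w| ≤ 1 / n) :
    HasSetWeight x S w := by
  intro ε hε
  obtain ⟨N, hN⟩ := one_div_eventually hε
  refine ⟨N + 1, fun n hn i => ?_⟩
  have h1 : (1 : ℕ) ≤ n := le_trans (Nat.le_add_left 1 N) hn
  exact lt_of_le_of_lt (h i n h1) (hN n (le_trans (Nat.le_succ N) hn))

open Classical in
lemma hasSetWeight_const_zero (S : Set ℝ) :
    HasSetWeight (fun _ => (0 : ℝ)) S (if (0 : ℝ) ∈ S then 1 else 0) := by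
  apply hasSetWeight_of_close
  intro i n hn
  have hn' : (0 : ℝ) < n := by exact_mod_cast hn
  rw [seqCount_eq]
  by_cases h0 : (0 : ℝ) ∈ S
  · have : (Finset.range n).filter (fun k => (fun _ => (0:ℝ)) (k + i) ∈ S) = Finset.range n := by
      apply Finset.filter_true_of_mem
      intro k _; exact h0
    rw [if_pos h0, this, Finset.card_range, div_self (ne_of_gt hn')]
    simpa using le_of_lt (by positivity : (0:ℝ) < 1 / n)
  · have : (Finset.range n).filter (fun k => (fun _ => (0:ℝ)) (k + i) ∈ S) = ∅ := by
      apply Finset.filter_false_of_mem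
      intro k _; exact h0
    rw [if_neg h0, this]
    simpa using le_of_lt (by positivity : (0:ℝ) < 1 / n)

open Classical in
lemma card_filter_eq_j (j i n : ℕ) :
    ((Finset.range n).filter (fun k => k + i = j)).card ≤ 1 := by
  apply Finset.card_le_one.2
  intro a ha b hb
  simp only [Finset.mem_filter] at ha hb
  omega

open Classical in
lemma hasSetWeight_xj (j : ℕ) (S : Set ℝ) :
    HasSetWeight (xj j) S (if (0 : ℝ) ∈ S then 1 else 0) := by
  classical
  apply hasSetWeight_of_close
  intro i n hn
  have hn' : (0 : ℝ) < n := by exact_mod_cast hn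
  rw [seqCount_eq]
  set F := (Finset.range n).filter (fun k => xj j (k + i) ∈ S) with hF
  have hFsub : F ⊆ Finset.range n := Finset.filter_subset _ _
  have hcard_le : (F.card : ℝ) ≤ n := by
    have h := Finset.card_le_card hFsub
    simp only [Finset.card_range] at h
    exact_mod_cast h
  by_cases h0 : (0 : ℝ) ∈ S
  · rw [if_pos h0]
    -- F ⊇ filter (k + i ≠ j), whose card ≥ n - 1
    have hsub : (Finset.range n).filter (fun k => ¬ (k + i = j)) ⊆ F := by
      intro k hk
      rw [hF, Finset.mem_filter]
      rw [Finset.mem_filter] at hk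
      refine ⟨hk.1, ?_⟩
      have hz : xj j (k + i) = 0 := by simp [xj, hk.2]
      rw [hz]; exact h0
    have hsplit := Finset.card_filter_add_card_filter_not
      (s := Finset.range n) (p := fun k => k + i = j)
    have h1 := card_filter_eq_j j i n
    have hge : n - 1 ≤ F.card := by
      have := Finset.card_le_card hsub
      rw [Finset.card_range] at hsplit
      omega
    have hgeR : (n : ℝ) - 1 ≤ (F.card : ℝ) := by
      have hge' : (n : ℝ) - 1 ≤ ((n - 1 : ℕ) : ℝ) := by
        rw [Nat.cast_sub hn]; simp
      exact le_trans hge' (by exact_mod_cast hge)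
    have heq : (F.card : ℝ) / n - 1 = ((F.card : ℝ) - n) / n := by field_simp
    rw [heq, abs_div, abs_of_pos hn']
    gcongr
    rw [abs_le]
    constructor <;> linarith
  · rw [if_neg h0]
    have hsub : F ⊆ (Finset.range n).filter (fun k => k + i = j) := by
      intro k hk
      rw [hF, Finset.mem_filter] at hk
      rw [Finset.mem_filter]
      refine ⟨hk.1, ?_⟩
      by_contra hne
      have hz : xj j (k + i) = 0 := by simp [xj, hne]
      rw [hz] at hk
      exact h0 hk.2
    have h1 : F.card ≤ 1 := le_trans (Finset.card_le_card hsub) (card_filter_eq_j j i n)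
    have h1R : (F.card : ℝ) ≤ 1 := by exact_mod_cast h1
    rw [sub_zero, abs_of_nonneg (by positivity)]
    gcongr

lemma supNorm_xj (j : ℕ) : supNorm (xj j) = 1 := by
  have hb : ∀ n, |xj j n| ≤ 1 := by
    intro n
    simp only [xj]
    split <;> simp
  apply le_antisymm
  · exact ciSup_le hb
  · have := le_ciSup (f := fun n => |xj j n|) ⟨1, fun y ⟨n, hn⟩ => hn ▸ hb n⟩ j
    simpa [xj, supNorm] using this

lemma supNorm_zero : supNorm (fun _ => (0 : ℝ)) = 0 := by
  simp [supNorm]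

lemma properlyDistributed_zero : ProperlyDistributed (fun _ => (0 : ℝ)) :=
  fun S _ _ => ⟨_, hasSetWeight_const_zero S⟩

lemma properlyDistributed_xj (j : ℕ) : ProperlyDistributed (xj j) :=
  fun S _ _ => ⟨_, hasSetWeight_xj j S⟩

/-- There is no (countably additive, nonnegative) measure `μ` on `ℕ` such that
`μ {n : x n ∈ S} = w(x, S)` for every properly distributed bounded sequence `x`
and every Borel subset `S` of `[-‖x‖∞, ‖x‖∞]`. -/
theorem no_measure_representing_weights :
    ¬ ∃ μ : MeasureTheory.Measure ℕ,
      ∀ x : ℕ → ℝ, IsBddSeq x → ProperlyDistributed x →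
        ∀ S : Set ℝ, MeasurableSet S →
          S ⊆ Set.Icc (-(supNorm x)) (supNorm x) →
          ∀ w : ℝ, HasSetWeight x S w → μ {n : ℕ | x n ∈ S} = ENNReal.ofReal w := by
  rintro ⟨μ, h⟩
  -- From the constant zero sequence: μ univ = 1
  have hw0 : HasSetWeight (fun _ => (0 : ℝ)) {0} 1 := by
    have := hasSetWeight_const_zero {0}
    simpa using this
  have h1 : μ Set.univ = 1 := by
    have := h (fun _ => (0 : ℝ)) ⟨0, fun n => by simp⟩ properlyDistributed_zero
      {0} (measurableSet_singleton 0)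
      (by rw [supNorm_zero]; intro a ha; simp at ha; simp [ha]) 1 hw0
    have hset : {n : ℕ | (fun _ => (0:ℝ)) n ∈ ({0} : Set ℝ)} = Set.univ := by
      ext n; simp
    rw [hset] at this
    rw [this]
    simp
  -- From the xj sequences: μ {j} = 0
  have h2 : ∀ j : ℕ, μ {j} = 0 := by
    intro j
    have hwj : HasSetWeight (xj j) {1} 0 := by
      have := hasSetWeight_xj j {1}
      simpa using this
    have := h (xj j) ⟨1, fun n => by simp [xj]; split <;> simp⟩ (properlyDistributed_xj j)
      {1} (measurableSet_singleton 1)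
      (by rw [supNorm_xj]; intro a ha; simp at ha; simp [ha]) 0 hwj
    have hset : {n : ℕ | xj j n ∈ ({1} : Set ℝ)} = {j} := by
      ext n
      simp only [Set.mem_setOf_eq, Set.mem_singleton_iff, xj]
      split <;> simp_all
    rw [hset] at this
    rw [this]
    simp
  have huniv : μ Set.univ = 0 := by
    have hdisj : Pairwise (Function.onFun Disjoint (fun j : ℕ => ({j} : Set ℕ))) := by
      intro i j hij
      simp [Function.onFun, Set.disjoint_singleton, hij]
    have := MeasureTheory.measure_iUnion (μ := μ) hdisj (fun j => measurableSet_singleton j)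
    rw [Set.iUnion_singleton_eq_range, Set.range_id'] at this
    rw [this]
    simp [h2]
  rw [h1] at huniv
  exact one_ne_zero huniv
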